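/- Given any group extension 1 → G → E → H → 1, there exists an injective group homomorphism E → G ≀≀ H into the unrestricted wreath product such that composing with the canonical projection G ≀≀ H → H recovers the quotient map E → H (Kaloujnine–Krasner embedding). -/

import Mathlib

/-- The unrestricted wreath product `G ≀≀ H = (∏_{h∈H} G) ⋊ H`. -/
def Wr (G H : Type*) [Group G] [Group H] := (H → G) × H

namespace Wr

variable {G H : Type*} [Group G] [Group H]

/-- First (non-homomorphic) projection `G ≀≀ H → ∏_{h∈H} G`. -/
def fst (a : Wr G H) : H → G := a.1

/-- Second projection `G ≀≀ H → H`. -/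
def snd (a : Wr G H) : H := a.2

instance instGroup : Group (Wr G H) where
  mul a b := (fun x => a.1 (b.2 * x) * b.1 x, a.2 * b.2)
  one := (1, 1)
  inv a := (fun x => (a.1 (a.2⁻¹ * x))⁻¹, a.2⁻¹)
  mul_assoc a b c := by
    refine Prod.ext ?_ ?_
    · funext x
      show a.1 (b.2 * (c.2 * x)) * b.1 (c.2 * x) * c.1 x
          = a.1 (b.2 * c.2 * x) * (b.1 (c.2 * x) * c.1 x)
      rw [mul_assoc, mul_assoc]
    · exact mul_assoc a.2 b.2 c.2
  one_mul a := by
    refine Prod.ext ?_ ?_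
    · funext x
      show (1 : H → G) (a.2 * x) * a.1 x = a.1 x
      simp
    · exact one_mul a.2
  mul_one a := by
    refine Prod.ext ?_ ?_
    · funext x
      show a.1 ((1 : H) * x) * (1 : H → G) x = a.1 x
      simp
    · exact mul_one a.2
  inv_mul_cancel a := by
    refine Prod.ext ?_ ?_
    · funext x
      show (a.1 (a.2⁻¹ * (a.2 * x)))⁻¹ * a.1 x = (1 : H → G) x
      simp [← mul_assoc]
    · exact inv_mul_cancel a.2

@[simp] theorem mul_def (a b : Wr G H) :
    a * b = (fun x => a.1 (b.2 * x) * b.1 x, a.2 * b.2) := rfl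

end Wr

/-- Kaloujnine–Krasner: for any extension `1 → G → E → H → 1` there is an
injective homomorphism `E → G ≀≀ H` lifting the quotient map `E → H`. -/
theorem kaloujnine_krasner {G H E : Type*} [Group G] [Group H] [Group E]
    (ι : G →* E) (q : E →* H)
    (hι : Function.Injective ι) (hq : Function.Surjective q)
    (hexact : ι.range = q.ker) :
    ∃ Ψ : E →* Wr G H, Function.Injective Ψ ∧ ∀ e : E, Wr.snd (Ψ e) = q e := by
  classical
  obtain ⟨t, ht⟩ := hq.hasRightInverse
  let eqv : G ≃* q.ker := (MonoidHom.ofInjective hι).trans (MulEquiv.subgroupCongr hexact)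
  have hmem : ∀ (e : E) (x : H), t (x⁻¹ * (q e)⁻¹) * e * (t x⁻¹)⁻¹ ∈ q.ker := by
    intro e x
    simp [MonoidHom.mem_ker, ht _, mul_assoc]
  let u : E → H → q.ker := fun e x => ⟨_, hmem e x⟩
  have humul : ∀ (a b : E) (x : H), u (a * b) x = u a (q b * x) * u b x := by
    intro a b x
    ext
    show t (x⁻¹ * (q (a * b))⁻¹) * (a * b) * (t x⁻¹)⁻¹
        = (t ((q b * x)⁻¹ * (q a)⁻¹) * a * (t (q b * x)⁻¹)⁻¹) *
          (t (x⁻¹ * (q b)⁻¹) * b * (t x⁻¹)⁻¹)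
    simp [map_mul, mul_inv_rev, mul_assoc]
  let Ψ : E →* Wr G H :=
  { toFun := fun e => (fun x => eqv.symm (u e x), q e)
    map_one' := by
      refine Prod.ext ?_ (map_one q)
      funext x
      have h1 : u 1 x = 1 := by
        ext
        show t (x⁻¹ * (q (1 : E))⁻¹) * 1 * (t x⁻¹)⁻¹ = 1
        simp
      show eqv.symm (u 1 x) = (1 : H → G) x
      simp [h1]
    map_mul' := by
      intro a b
      refine Prod.ext ?_ (map_mul q a b)
      funext x
      show eqv.symm (u (a * b) x) = eqv.symm (u a (q b * x)) * eqv.symm (u b x)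
      rw [← map_mul, humul] }
  refine ⟨Ψ, ?_, fun e => rfl⟩
  rw [injective_iff_map_eq_one]
  intro e he
  have h2 : q e = 1 := congrArg Prod.snd he
  have h1 : eqv.symm (u e 1) = (1 : H → G) 1 := congrFun (congrArg Prod.fst he) 1
  have h3 : u e 1 = 1 := by
    have := eqv.symm.injective (a₂ := 1) (by simpa using h1)
    simpa using this
  have h4 := congrArg Subtype.val h3
  have h5 : t (1⁻¹ * (q e)⁻¹) * e * (t 1⁻¹)⁻¹ = 1 := h4
  rw [h2] at h5
  simp at h5
  have h6 : (t 1)⁻¹ * (e * t 1) = 1 := by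
    simpa [mul_assoc] using congrArg (fun z => (t 1)⁻¹ * z * t 1) h5
  rw [inv_mul_eq_one] at h6
  exact right_eq_mul.mp h6
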